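/- Let G be a finite connected symmetric directed multigraph, let φ be a circulation on G, and let δ be a generalized intersection distance measure for φ. Define the cycle-adjacency graph 𝒢 whose vertices are the orbits of φ acting on E, two distinct orbits being adjacent if and only if they contain arcs f and f′ with pred f = pred f′; for arcs e, e′ let Δ(e, e′) denote the graph distance in 𝒢 between the orbit of e and the orbit of e′. Then for all arcs e, e′ and every x ∈ ℤ: δ x e′ e′ ≤ δ x e e + 2·Δ(e, e′). -/

import Mathlib

/-- For any circulation `φ` on a finite connected symmetric
directed multigraph and any generalized intersection distance measure `δ` for
`φ`, and any arcs `e, e'` and `x ∈ ℤ`: `δ x e' e' ≤ δ x e e + 2·Δ(e,e')`, where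
`Δ(e,e')` is the distance between the orbits of `e` and `e'` in the
cycle-adjacency graph.  (Formulated below via chains: for every `D` such that
there is a chain of `D` adjacency hops between the orbit of `e` and the orbit
of `e'`, the bound `δ x e' e' ≤ δ x e e + 2·D` holds; in particular it holds
for `D = Δ(e,e')`.) -/
theorem stmt_10 {V E : Type} [Fintype V] [Fintype E] [Nonempty V]
    (pred succ : E → V) (rev : E → E)
    (hrev : ∀ e, rev (rev e) = e)
    (hpredrev : ∀ e, pred (rev e) = succ e)
    (hsuccrev : ∀ e, succ (rev e) = pred e)
    (hrevloop : ∀ e, pred e = succ e → rev e = e)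
    -- connectedness of the underlying undirected graph
    (hconn : ∀ u v : V, Relation.ReflTransGen
      (fun a b => ∃ e, (pred e = a ∧ succ e = b) ∨ (pred e = b ∧ succ e = a)) u v)
    (φ : Equiv.Perm E) (hφ : ∀ e, succ e = pred (φ e))
    -- δ is a generalized intersection distance measure
    (δ : ℤ → E → E → ℕ)
    (hδ0 : ∀ e, δ 0 e e = 0)
    (hδ1 : ∀ e, δ 1 e (φ e) = 0)
    (hδint : ∀ e₁ e₂, pred e₁ = pred e₂ → δ 0 e₁ e₂ ≤ 1)
    (hδsymm : ∀ (x : ℤ) (e₁ e₂ : E), δ (-x) e₂ e₁ = δ x e₁ e₂)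
    (hδtri : ∀ (x y : ℤ) (e₁ e₂ e₃ : E), δ (x + y) e₁ e₃ ≤ δ x e₁ e₂ + δ y e₂ e₃) :
    ∀ (e e' : E) (x : ℤ) (D : ℕ),
      (∃ f : ℕ → E,
        (∃ z : ℤ, (φ ^ z) (f 0) = e) ∧
        (∃ z : ℤ, (φ ^ z) (f D) = e') ∧
        (∀ i < D, ∃ a b : E,
          (∃ z : ℤ, (φ ^ z) (f i) = a) ∧
          (∃ z : ℤ, (φ ^ z) (f (i + 1)) = b) ∧
          pred a = pred b)) →
      δ x e' e' ≤ δ x e e + 2 * D := by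

  intro e e' x D ⟨f, ⟨z0, hz0⟩, ⟨zD, hzD⟩, hchain⟩
  -- δ x · · on the diagonal is invariant under φ
  have step : ∀ a : E, δ x (φ a) (φ a) = δ x a a := by
    intro a
    have hsy : δ (-1) (φ a) a = 0 := by rw [hδsymm 1 a (φ a)]; exact hδ1 a
    have h1 : δ x (φ a) (φ a) ≤ δ x a a := by
      have t1 : δ x (φ a) (φ a) ≤ δ (-1) (φ a) a + δ (x + 1) a (φ a) := by
        have := hδtri (-1) (x + 1) (φ a) a (φ a)
        simpa using this
      have t2 : δ (x + 1) a (φ a) ≤ δ x a a + δ 1 a (φ a) := hδtri x 1 a a (φ a)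
      rw [hsy, hδ1 a] at *
      omega
    have h2 : δ x a a ≤ δ x (φ a) (φ a) := by
      have t1 : δ x a a ≤ δ 1 a (φ a) + δ (x - 1) (φ a) a := by
        have := hδtri 1 (x - 1) a (φ a) a
        simpa using this
      have t2 : δ (x - 1) (φ a) a ≤ δ x (φ a) (φ a) + δ (-1) (φ a) a := by
        have := hδtri x (-1) (φ a) (φ a) a
        simpa [sub_eq_add_neg] using this
      rw [hsy, hδ1 a] at *
      omega
    omega
  have orb : ∀ (z : ℤ) (a : E), δ x ((φ ^ z) a) ((φ ^ z) a) = δ x a a := by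
    intro z
    induction z using Int.induction_on with
    | zero => intro a; simp
    | succ k ih =>
        intro a
        have : ((φ : Equiv.Perm E) ^ ((k : ℤ) + 1)) a = φ ((φ ^ (k : ℤ)) a) := by
          rw [add_comm, zpow_one_add, Equiv.Perm.mul_apply]
        rw [this, step, ih]
    | pred k ih =>
        intro a
        have key : ((φ : Equiv.Perm E) ^ (-(k : ℤ))) a
            = φ ((φ ^ (-(k : ℤ) - 1)) a) := by
          have : ((φ : Equiv.Perm E) ^ (-(k : ℤ))) = φ * φ ^ (-(k : ℤ) - 1) := by
            rw [← zpow_one_add]; ring_nf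
          rw [this, Equiv.Perm.mul_apply]
        have := ih a
        rw [key, step] at this
        exact this
  -- adjacency step
  have hop : ∀ i < D, δ x (f (i + 1)) (f (i + 1)) ≤ δ x (f i) (f i) + 2 := by
    intro i hi
    obtain ⟨a, b, ⟨za, hza⟩, ⟨zb, hzb⟩, hpp⟩ := hchain i hi
    have hab : δ 0 a b ≤ 1 := hδint a b hpp
    have hba : δ 0 b a ≤ 1 := by
      have := hδsymm 0 a b
      simp only [neg_zero] at this
      omega
    have t1 : δ x b b ≤ δ 0 b a + δ (x + 0) a b := by
      have := hδtri 0 (x + 0) b a b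
      simpa using this
    have t2 : δ (x + 0) a b ≤ δ x a a + δ 0 a b := hδtri x 0 a a b
    have ea : δ x a a = δ x (f i) (f i) := by rw [← hza, orb]
    have eb : δ x b b = δ x (f (i + 1)) (f (i + 1)) := by rw [← hzb, orb]
    omega
  have main : ∀ i ≤ D, δ x (f i) (f i) ≤ δ x (f 0) (f 0) + 2 * i := by
    intro i
    induction i with
    | zero => intro _; simp
    | succ k ih =>
        intro hk
        have h1 := ih (Nat.le_of_succ_le hk)
        have h2 := hop k (Nat.lt_of_succ_le hk)
        omega
  have he : δ x e e = δ x (f 0) (f 0) := by rw [← hz0, orb]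
  have he' : δ x e' e' = δ x (f D) (f D) := by rw [← hzD, orb]
  have := main D le_rfl
  omega
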